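/- Let M and K be symmetric n×n real matrices, let A be the 2n×2n block matrix [[0, M],[−K, 0]], and for given n×n matrices M̃ and K̃ define the kick matrix B(c) = [[I, 0],[−c K̃, I]] and the move matrix C(c) = [[I, c M̃],[0, I]]. Then with the τ⁴-corrected matrices M̃ = M − (τ²/6)·M(KM) + (τ⁴/120)·M(KM)² and K̃ = K + (τ²/12)·(KM)K + (τ⁴/120)·(KM)²K, as τ → 0, B(τ/2)·C(τ)·B(τ/2) − exp(τA) = O(τ⁷). -/

import Mathlib

open Asymptotics Filter Matrix

section AuxExp

variable {I : Type*} [Fintype I] [DecidableEq I]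

attribute [local instance] Matrix.linftyOpNormedRing Matrix.linftyOpNormedAlgebra

private lemma entry_abs_le_linfty (X : Matrix I I ℝ) (i j : I) : |X i j| ≤ ‖X‖ := by
  have h1 : ‖X i j‖₊ ≤ ‖X‖₊ := by
    rw [Matrix.linfty_opNNNorm_def]
    calc ‖X i j‖₊ ≤ ∑ j' : I, ‖X i j'‖₊ :=
        Finset.single_le_sum (f := fun j' => ‖X i j'‖₊) (fun _ _ => zero_le)
          (Finset.mem_univ j)
      _ ≤ _ := Finset.le_sup (f := fun i => ∑ j : I, ‖X i j‖₊) (Finset.mem_univ i)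
  exact_mod_cast h1

private lemma exp_tail_entry_bound (A : Matrix I I ℝ) :
    ∃ c : ℝ, 0 ≤ c ∧ ∀ τ : ℝ, |τ| ≤ 1 → ∀ i j,
      |(NormedSpace.exp (τ • A)
          - ∑ k ∈ Finset.range 7, (τ ^ k * (Nat.factorial k : ℝ)⁻¹) • A ^ k) i j|
        ≤ c * |τ| ^ 7 := by
  refine ⟨∑' k : ℕ, ‖A‖ ^ (k + 7) * (Nat.factorial (k + 7) : ℝ)⁻¹, ?_, ?_⟩
  · exact tsum_nonneg fun k => by positivity
  intro τ hτ i j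
  set f : ℕ → Matrix I I ℝ := fun k => ((Nat.factorial k : ℝ)⁻¹) • (τ • A) ^ k with hf
  have hsum : Summable f := NormedSpace.expSeries_summable' (𝕂 := ℝ) (τ • A)
  have hhead : ∀ k, f k = (τ ^ k * (Nat.factorial k : ℝ)⁻¹) • A ^ k := by
    intro k; rw [hf]; simp [smul_pow, smul_smul, mul_comm]
  have hE : NormedSpace.exp (τ • A)
      - ∑ k ∈ Finset.range 7, (τ ^ k * (Nat.factorial k : ℝ)⁻¹) • A ^ k
      = ∑' k, f (k + 7) := by
    simp_rw [← hhead]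
    have hexp : NormedSpace.exp (τ • A) = ∑' k, f k :=
      congrFun (NormedSpace.exp_eq_tsum ℝ) (τ • A)
    rw [hexp, ← Summable.sum_add_tsum_nat_add 7 hsum, add_sub_cancel_left]
  rw [hE]
  refine (entry_abs_le_linfty _ i j).trans ?_
  have hnorm : Summable fun k => ‖f (k + 7)‖ :=
    (NormedSpace.norm_expSeries_summable' (𝕂 := ℝ) (τ • A)).comp_injective
      (add_left_injective 7)
  refine (norm_tsum_le_tsum_norm hnorm).trans ?_
  have hg : Summable fun k : ℕ => ‖A‖ ^ (k + 7) * (Nat.factorial (k + 7) : ℝ)⁻¹ := by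
    have := (Real.summable_pow_div_factorial ‖A‖).comp_injective (add_left_injective 7)
    simpa [Function.comp_def, div_eq_mul_inv] using this
  have hterm : ∀ k : ℕ, ‖f (k + 7)‖
      ≤ (‖A‖ ^ (k + 7) * (Nat.factorial (k + 7) : ℝ)⁻¹) * |τ| ^ 7 := by
    intro k
    rw [hf]
    simp only []
    rw [norm_smul, norm_inv, Real.norm_natCast]
    have h1 : ‖(τ • A) ^ (k + 7)‖ ≤ ‖τ • A‖ ^ (k + 7) :=
      norm_pow_le' _ (Nat.succ_le_succ (Nat.zero_le _))
    have h2 : ‖τ • A‖ ^ (k + 7) = |τ| ^ (k + 7) * ‖A‖ ^ (k + 7) := by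
      rw [norm_smul, Real.norm_eq_abs, mul_pow]
    have h3 : |τ| ^ (k + 7) ≤ |τ| ^ 7 := by
      calc |τ| ^ (k + 7) = |τ| ^ k * |τ| ^ 7 := by rw [pow_add]
        _ ≤ 1 * |τ| ^ 7 := by
            apply mul_le_mul_of_nonneg_right _ (by positivity)
            exact pow_le_one₀ (abs_nonneg τ) hτ
        _ = |τ| ^ 7 := one_mul _
    calc (Nat.factorial (k + 7) : ℝ)⁻¹ * ‖(τ • A) ^ (k + 7)‖
        ≤ (Nat.factorial (k + 7) : ℝ)⁻¹ * (|τ| ^ (k + 7) * ‖A‖ ^ (k + 7)) := by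
          apply mul_le_mul_of_nonneg_left _ (by positivity)
          rw [← h2]; exact h1
      _ ≤ (Nat.factorial (k + 7) : ℝ)⁻¹ * (|τ| ^ 7 * ‖A‖ ^ (k + 7)) := by
          apply mul_le_mul_of_nonneg_left _ (by positivity)
          exact mul_le_mul_of_nonneg_right h3 (by positivity)
      _ = (‖A‖ ^ (k + 7) * (Nat.factorial (k + 7) : ℝ)⁻¹) * |τ| ^ 7 := by ring
  calc (∑' k, ‖f (k + 7)‖)
      ≤ ∑' k : ℕ, (‖A‖ ^ (k + 7) * (Nat.factorial (k + 7) : ℝ)⁻¹) * |τ| ^ 7 :=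
        Summable.tsum_le_tsum hterm hnorm (hg.mul_right _)
    _ = (∑' k : ℕ, ‖A‖ ^ (k + 7) * (Nat.factorial (k + 7) : ℝ)⁻¹) * |τ| ^ 7 :=
        tsum_mul_right

end AuxExp

private lemma key_alg {n : ℕ} (M K : Matrix (Fin n) (Fin n) ℝ) (τ : ℝ) :
    Matrix.fromBlocks 1 0
          (-((τ / 2) • (K + (τ ^ 2 / 12) • ((K * M) * K)
              + (τ ^ 4 / 120) • ((K * M) * (K * M) * K)))) 1 *
        Matrix.fromBlocks 1
          (τ • (M - (τ ^ 2 / 6) • (M * (K * M))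
              + (τ ^ 4 / 120) • (M * ((K * M) * (K * M))))) 0 1 *
        Matrix.fromBlocks 1 0
          (-((τ / 2) • (K + (τ ^ 2 / 12) • ((K * M) * K)
              + (τ ^ 4 / 120) • ((K * M) * (K * M) * K)))) 1
      = (∑ k ∈ Finset.range 7,
          (τ ^ k * (Nat.factorial k : ℝ)⁻¹) • (Matrix.fromBlocks 0 M (-K) 0) ^ k)
        + τ ^ 7 • Matrix.fromBlocks
            ((τ / 2880) • ((M * K) ^ 4) - (τ ^ 3 / 28800) • ((M * K) ^ 5))
            0
            ((1 / 960 : ℝ) • ((K * M) ^ 3 * K) - (τ ^ 2 / 3456) • ((K * M) ^ 4 * K)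
              + (τ ^ 4 / 115200) • ((K * M) ^ 5 * K)
              + (τ ^ 8 / 6912000) • ((K * M) ^ 7 * K))
            ((τ / 2880) • ((K * M) ^ 4) - (τ ^ 3 / 28800) • ((K * M) ^ 5)) := by
  set A : Matrix (Fin n ⊕ Fin n) (Fin n ⊕ Fin n) ℝ := Matrix.fromBlocks 0 M (-K) 0 with hA
  have h0 : A ^ 0 = Matrix.fromBlocks 1 0 0 1 := by rw [pow_zero, Matrix.fromBlocks_one]
  have h1 : A ^ 1 = Matrix.fromBlocks 0 M (-K) 0 := by rw [pow_one]
  have h2 : A ^ 2 = Matrix.fromBlocks (-(M * K)) 0 0 (-(K * M)) := by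
    rw [pow_succ, h1, hA]
    simp [Matrix.fromBlocks_multiply]
  have h3 : A ^ 3 = Matrix.fromBlocks 0 (-(M * (K * M))) (K * (M * K)) 0 := by
    rw [pow_succ, h2, hA]
    simp [Matrix.fromBlocks_multiply, mul_assoc]
  have h4 : A ^ 4 = Matrix.fromBlocks (M * (K * (M * K))) 0 0 (K * (M * (K * M))) := by
    rw [pow_succ, h3, hA]
    simp [Matrix.fromBlocks_multiply, mul_assoc]
  have h5 : A ^ 5 = Matrix.fromBlocks 0 (M * (K * (M * (K * M))))
      (-(K * (M * (K * (M * K))))) 0 := by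
    rw [pow_succ, h4, hA]
    simp [Matrix.fromBlocks_multiply, mul_assoc]
  have h6 : A ^ 6 = Matrix.fromBlocks (-(M * (K * (M * (K * (M * K)))))) 0 0
      (-(K * (M * (K * (M * (K * M)))))) := by
    rw [pow_succ, h5, hA]
    simp [Matrix.fromBlocks_multiply, mul_assoc]
  simp only [Finset.sum_range_succ, Finset.sum_range_zero, zero_add,
    h0, h1, h2, h3, h4, h5, h6]
  simp only [Matrix.fromBlocks_multiply, Matrix.fromBlocks_smul, Matrix.fromBlocks_add]
  rw [Matrix.fromBlocks_inj]
  refine ⟨?_, ?_, ?_, ?_⟩ <;>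
  · simp only [Nat.factorial, Nat.cast_ofNat, Nat.cast_one, mul_add, add_mul, mul_sub, sub_mul,
      mul_smul_comm, smul_mul_assoc, smul_smul, smul_add, smul_sub, mul_one, one_mul,
      mul_zero, zero_mul, mul_neg, neg_mul, smul_neg, neg_smul, add_zero, zero_add,
      smul_zero, neg_zero, neg_neg, pow_succ, pow_zero, mul_assoc]
    module

attribute [local instance] Matrix.normedAddCommGroup
attribute [local instance] Matrix.normedSpace

theorem kick_move_kick_quadratic_hamiltonian_order6
    (n : ℕ) (M K : Matrix (Fin n) (Fin n) ℝ) (hM : M.IsSymm) (hK : K.IsSymm) :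
    (fun τ : ℝ =>
        Matrix.fromBlocks 1 0
              (-((τ / 2) • (K + (τ ^ 2 / 12) • ((K * M) * K)
                  + (τ ^ 4 / 120) • ((K * M) * (K * M) * K)))) 1 *
            Matrix.fromBlocks 1
              (τ • (M - (τ ^ 2 / 6) • (M * (K * M))
                  + (τ ^ 4 / 120) • (M * ((K * M) * (K * M))))) 0 1 *
            Matrix.fromBlocks 1 0
              (-((τ / 2) • (K + (τ ^ 2 / 12) • ((K * M) * K)
                  + (τ ^ 4 / 120) • ((K * M) * (K * M) * K)))) 1 -
          NormedSpace.exp (τ • Matrix.fromBlocks 0 M (-K) 0))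
      =O[nhds (0 : ℝ)] fun τ : ℝ => τ ^ 7 := by
  set A : Matrix (Fin n ⊕ Fin n) (Fin n ⊕ Fin n) ℝ := Matrix.fromBlocks 0 M (-K) 0 with hA
  set T : ℝ → Matrix (Fin n ⊕ Fin n) (Fin n ⊕ Fin n) ℝ := fun τ =>
    ∑ k ∈ Finset.range 7, (τ ^ k * (Nat.factorial k : ℝ)⁻¹) • A ^ k with hT
  set R : ℝ → Matrix (Fin n ⊕ Fin n) (Fin n ⊕ Fin n) ℝ := fun τ =>
    Matrix.fromBlocks
      ((τ / 2880) • ((M * K) ^ 4) - (τ ^ 3 / 28800) • ((M * K) ^ 5))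
      0
      ((1 / 960 : ℝ) • ((K * M) ^ 3 * K) - (τ ^ 2 / 3456) • ((K * M) ^ 4 * K)
        + (τ ^ 4 / 115200) • ((K * M) ^ 5 * K)
        + (τ ^ 8 / 6912000) • ((K * M) ^ 7 * K))
      ((τ / 2880) • ((K * M) ^ 4) - (τ ^ 3 / 28800) • ((K * M) ^ 5)) with hR
  have hfun : ∀ τ : ℝ,
      Matrix.fromBlocks 1 0
            (-((τ / 2) • (K + (τ ^ 2 / 12) • ((K * M) * K)
                + (τ ^ 4 / 120) • ((K * M) * (K * M) * K)))) 1 *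
          Matrix.fromBlocks 1
            (τ • (M - (τ ^ 2 / 6) • (M * (K * M))
                + (τ ^ 4 / 120) • (M * ((K * M) * (K * M))))) 0 1 *
          Matrix.fromBlocks 1 0
            (-((τ / 2) • (K + (τ ^ 2 / 12) • ((K * M) * K)
                + (τ ^ 4 / 120) • ((K * M) * (K * M) * K)))) 1 -
        NormedSpace.exp (τ • A)
      = τ ^ 7 • R τ - (NormedSpace.exp (τ • A) - T τ) := by
    intro τ
    rw [key_alg M K τ]
    abel
  have h1 : (fun τ : ℝ => τ ^ 7 • R τ) =O[nhds (0 : ℝ)] fun τ : ℝ => τ ^ 7 := by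
    have hRc : Continuous R := by
      rw [hR]
      refine Continuous.matrix_fromBlocks ?_ continuous_const ?_ ?_ <;> fun_prop
    have hR1 : R =O[nhds (0 : ℝ)] (fun _ : ℝ => (1 : ℝ)) :=
      (hRc.tendsto 0).isBigO_one ℝ
    have := (Asymptotics.isBigO_refl (fun τ : ℝ => τ ^ 7) (nhds (0 : ℝ))).smul hR1
    simpa using this
  have h2 : (fun τ : ℝ => NormedSpace.exp (τ • A) - T τ) =O[nhds (0 : ℝ)]
      fun τ : ℝ => τ ^ 7 := by
    rw [Asymptotics.isBigO_iff]
    obtain ⟨c, hc0, hc⟩ := exp_tail_entry_bound A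
    refine ⟨c, ?_⟩
    filter_upwards [Metric.ball_mem_nhds (0 : ℝ) one_pos] with τ hτ
    have hτ1 : |τ| ≤ 1 := le_of_lt (by simpa [Real.dist_eq] using hτ)
    rw [Real.norm_eq_abs, abs_pow]
    refine (Matrix.norm_le_iff (by positivity)).mpr ?_
    intro i j
    simpa [Real.norm_eq_abs, hT] using hc τ hτ1 i j
  have := h1.sub h2
  refine this.congr' ?_ (EventuallyEq.rfl)
  exact Eventually.of_forall fun τ => (hfun τ).symm
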